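/- Let H and K be real Hilbert spaces, let J : H → ℝ and G : H → K be continuously Fréchet differentiable on a neighborhood of a point x̄ ∈ H with G(x̄) = 0. Assume that x̄ is a local minimizer of J on the set {x ∈ H : G(x) = 0}, and that the Fréchet derivative DG(x̄) : H → K is surjective. Then there exists λ ∈ K such that DJ(x̄) = DG(x̄)* λ, i.e. DJ(x̄)h = ⟨λ, DG(x̄)h⟩_K for every h ∈ H. -/

import Mathlib

open scoped RealInnerProductSpace

/-- Lagrange multiplier rule (KKT conditions) for equality-constrained minimization in
Hilbert spaces: if `xbar` is a local minimizer of `J` on `{x | G x = 0}`, `J` and `G` are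
`C¹` near `xbar`, and `DG(xbar)` is surjective, then there is a multiplier `λ ∈ K` with
`DJ(xbar) = DG(xbar)* λ`. -/
theorem exists_lagrange_multiplier
    {H K : Type*}
    [NormedAddCommGroup H] [InnerProductSpace ℝ H] [CompleteSpace H]
    [NormedAddCommGroup K] [InnerProductSpace ℝ K] [CompleteSpace K]
    (J : H → ℝ) (G : H → K) (xbar : H)
    (hJ : ContDiffAt ℝ 1 J xbar) (hG : ContDiffAt ℝ 1 G xbar)
    (hG0 : G xbar = 0)
    (hmin : IsLocalMinOn J {x : H | G x = 0} xbar)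
    (hsurj : Function.Surjective (fderiv ℝ G xbar)) :
    ∃ l : K, ∀ h : H, fderiv ℝ J xbar h = ⟪l, fderiv ℝ G xbar h⟫ := by
  set T := fderiv ℝ G xbar with hT
  set φ := fderiv ℝ J xbar with hφ
  have hGd : HasStrictFDerivAt G T xbar := hG.hasStrictFDerivAt one_ne_zero
  have hJd : HasStrictFDerivAt J φ xbar := hJ.hasStrictFDerivAt one_ne_zero
  have hset : {x : H | G x = 0} = {x | G x = G xbar} := by rw [hG0]
  have hextr : IsLocalExtrOn J {x | G x = G xbar} xbar := Or.inl (hset ▸ hmin)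
  obtain ⟨Λ, Λ₀, hne, hΛ⟩ := hextr.exists_linear_map_of_hasStrictFDerivAt hGd hJd
  have hΛ₀ : Λ₀ ≠ 0 := by
    rintro rfl
    apply hne
    have hΛz : Λ = 0 := by
      ext k
      obtain ⟨h, rfl⟩ := hsurj k
      have := hΛ h
      simpa using this
    simp [hΛz]
  have hker : ∀ h : H, T h = 0 → φ h = 0 := by
    intro h hh
    have := hΛ h
    rw [hh, map_zero, zero_add, smul_eq_mul] at this
    exact (mul_eq_zero.1 this).resolve_left hΛ₀
  -- construct the multiplier
  have hkerClosed : IsClosed ((LinearMap.ker (T : H →ₗ[ℝ] K) : Submodule ℝ H) : Set H) := ContinuousLinearMap.isClosed_ker T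
  haveI : CompleteSpace (LinearMap.ker (T : H →ₗ[ℝ] K)) := hkerClosed.completeSpace_coe
  set V := (LinearMap.ker (T : H →ₗ[ℝ] K))ᗮ with hV
  set S : V →L[ℝ] K := T.comp V.subtypeL with hS
  have hinj : LinearMap.ker (S : V →ₗ[ℝ] K) = ⊥ := by
    rw [LinearMap.ker_eq_bot']
    intro v hv
    have hv' : (v : H) ∈ LinearMap.ker (T : H →ₗ[ℝ] K) := hv
    have hvv : ⟪(v : H), (v : H)⟫ = 0 :=
      ((Submodule.mem_orthogonal (LinearMap.ker (T : H →ₗ[ℝ] K)) (v : H)).1 v.2) (v : H) hv'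
    exact Subtype.ext (inner_self_eq_zero.1 hvv)
  have hsurjS : LinearMap.range (S : V →ₗ[ℝ] K) = ⊤ := by
    rw [LinearMap.range_eq_top]
    intro k
    obtain ⟨h, rfl⟩ := hsurj k
    obtain ⟨y, hy, z, hz, rfl⟩ := (LinearMap.ker (T : H →ₗ[ℝ] K)).exists_add_mem_mem_orthogonal h
    refine ⟨⟨z, hz⟩, ?_⟩
    have : T y = 0 := hy
    simp [hS, this]
  set e := ContinuousLinearEquiv.ofBijective S hinj hsurjS with he
  set ψ : K →L[ℝ] ℝ := (φ.comp V.subtypeL).comp (e.symm : K →L[ℝ] V) with hψ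
  refine ⟨(InnerProductSpace.toDual ℝ K).symm ψ, fun h => ?_⟩
  rw [InnerProductSpace.toDual_symm_apply]
  obtain ⟨y, hy, z, hz, hdecomp⟩ := (LinearMap.ker (T : H →ₗ[ℝ] K)).exists_add_mem_mem_orthogonal h
  have hTy : T y = 0 := hy
  have hTh : T h = S ⟨z, hz⟩ := by simp [hdecomp, hS, hTy]
  have hesymm : e.symm (T h) = ⟨z, hz⟩ := by
    rw [hTh]
    exact ContinuousLinearEquiv.ofBijective_symm_apply_apply S hinj hsurjS _
  have hφy : φ y = 0 := hker y hTy
  calc φ h = φ y + φ z := by rw [hdecomp]; exact φ.map_add y z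
    _ = φ z := by rw [hφy, zero_add]
    _ = ψ (T h) := by rw [hψ]; simp [hesymm]
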